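/- For α > −1 and 0 ≤ k ≤ n, and any natural number j, the monic Laguerre polynomials satisfy the connection formula L_{n−k}^{α}(z) = Σ_{ν=k}^{k+j} binom(j, ν−k) · ((n−k)!/(n−ν)!) · L_{n−ν}^{α+j}(z), provided n ≥ k+j. -/

import Mathlib

open Polynomial Finset

/-- The monic Laguerre polynomials with parameter `α`, via the three-term recurrence
`L_{n+1} = (x - (2n+1+α)) L_n - n(n+α) L_{n-1}`. -/
noncomputable def laguerreM (α : ℝ) : ℕ → Polynomial ℝ
  | 0 => 1
  | 1 => X - C (α + 1)
  | (n + 2) =>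
      (X - C (2 * ((n : ℝ) + 1) + α + 1)) * laguerreM α (n + 1)
        - C (((n : ℝ) + 1) * (((n : ℝ) + 1) + α)) * laguerreM α n

lemma onestepQ (α : ℝ) : ∀ m, laguerreM α (m+1) = laguerreM (α+1) (m+1) + C (((m+1:ℕ)):ℝ) * laguerreM (α+1) m
    ∧ laguerreM α (m+2) = laguerreM (α+1) (m+2) + C (((m+2:ℕ)):ℝ) * laguerreM (α+1) (m+1) := by
  intro m
  induction m with
  | zero =>
    constructor
    · simp only [laguerreM]; push_cast; simp only [C_add, C_mul, C_1, C_0, map_ofNat]; ring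
    · simp only [laguerreM]; push_cast; simp only [C_add, C_mul, C_1, C_0, map_ofNat]; ring
  | succ m ih =>
    obtain ⟨h1, h2⟩ := ih
    refine ⟨h2, ?_⟩
    rw [show m+1+2 = m+3 from rfl, show laguerreM α (m+3) = _ from laguerreM.eq_3 α (m+1),
      show laguerreM (α+1) (m+3) = _ from laguerreM.eq_3 (α+1) (m+1),
      show m+1+1 = m+2 from rfl, h2,
      show laguerreM (α+1) (m+2) = _ from laguerreM.eq_3 (α+1) m, h1]
    push_cast
    simp only [C_add, C_mul, C_1, C_0, map_ofNat]
    ring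

lemma onestep (α : ℝ) (m : ℕ) :
    laguerreM α m = laguerreM (α+1) m + C (m:ℝ) * laguerreM (α+1) (m-1) := by
  cases m with
  | zero => simp [laguerreM]
  | succ m => exact (onestepQ α m).1

lemma connection_aux (α : ℝ) (j : ℕ) : ∀ m, j ≤ m →
    laguerreM α m = ∑ i ∈ Finset.range (j+1),
      C ((j.choose i : ℝ) * (m.factorial : ℝ) / ((m - i).factorial : ℝ))
        * laguerreM (α + j) (m - i) := by
  induction j with
  | zero =>
    intro m _
    simp [div_self (by positivity : ((m.factorial : ℝ)) ≠ 0)]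
  | succ j ih =>
    intro m hm
    have hjm : j ≤ m := Nat.le_of_succ_le hm
    rw [ih m hjm]
    have hcast : α + (j:ℝ) + 1 = α + ((j+1 : ℕ):ℝ) := by push_cast; ring
    have expand : ∀ i ∈ Finset.range (j+1),
        C ((j.choose i : ℝ) * (m.factorial : ℝ) / ((m - i).factorial : ℝ)) * laguerreM (α + j) (m - i)
        = C ((j.choose i : ℝ) * (m.factorial : ℝ) / ((m - i).factorial : ℝ)) * laguerreM (α + (j+1:ℕ)) (m - i)
          + C ((j.choose i : ℝ) * (m.factorial : ℝ) / ((m - (i+1)).factorial : ℝ)) * laguerreM (α + (j+1:ℕ)) (m - (i+1)) := by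
      intro i hi
      have hij : i ≤ j := Nat.lt_succ_iff.mp (Finset.mem_range.mp hi)
      have hpos : 0 < m - i := by omega
      have hsub : m - i - 1 = m - (i+1) := by omega
      rw [onestep (α + j) (m - i), hcast, hsub, mul_add, ← mul_assoc, ← C_mul]
      congr 2
      have hfac : ((m - i).factorial : ℝ) = ((m-i : ℕ) : ℝ) * ((m - (i+1)).factorial : ℝ) := by
        rw [show m - i = (m - (i+1)) + 1 by omega, Nat.factorial_succ]
        push_cast
        ring
      rw [hfac]
      have h1 : ((m-i : ℕ) : ℝ) ≠ 0 := by positivity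
      have h2 : ((m - (i+1)).factorial : ℝ) ≠ 0 := by positivity
      field_simp
    rw [Finset.sum_congr rfl expand, Finset.sum_add_distrib]
    -- now handle RHS
    have hRHS : ∑ i ∈ Finset.range (j+1+1),
        C (((j+1).choose i : ℝ) * (m.factorial : ℝ) / ((m - i).factorial : ℝ)) * laguerreM (α + (j+1:ℕ)) (m - i)
      = (∑ i ∈ Finset.range (j+1),
          C ((j.choose i : ℝ) * (m.factorial : ℝ) / ((m - i).factorial : ℝ)) * laguerreM (α + (j+1:ℕ)) (m - i))
        + ∑ i ∈ Finset.range (j+1),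
          C ((j.choose i : ℝ) * (m.factorial : ℝ) / ((m - (i+1)).factorial : ℝ)) * laguerreM (α + (j+1:ℕ)) (m - (i+1)) := by
      have key : ∀ i ∈ Finset.range (j+2),
          C (((j+1).choose i : ℝ) * (m.factorial : ℝ) / ((m - i).factorial : ℝ)) * laguerreM (α + (j+1:ℕ)) (m - i)
          = C ((j.choose i : ℝ) * (m.factorial : ℝ) / ((m - i).factorial : ℝ)) * laguerreM (α + (j+1:ℕ)) (m - i)
            + (if i = 0 then 0 else
                C ((j.choose (i-1) : ℝ) * (m.factorial : ℝ) / ((m - i).factorial : ℝ)) * laguerreM (α + (j+1:ℕ)) (m - i)) := by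
        intro i _
        cases i with
        | zero => simp
        | succ i =>
          simp only [Nat.succ_ne_zero, if_false, Nat.add_sub_cancel]
          rw [Nat.choose_succ_succ]
          push_cast [Nat.succ_eq_add_one]
          rw [add_mul, add_div, C_add]
          ring
      rw [Finset.sum_congr rfl key, Finset.sum_add_distrib]
      congr 1
      · rw [Finset.sum_range_succ]
        simp [Nat.choose_succ_self]
      · rw [Finset.sum_range_succ']
        simp
    rw [hRHS]

/-- connection formula for monic Laguerre polynomials:
`L_{n−k}^{α} = Σ_{ν=k}^{k+j} C(j, ν−k) ((n−k)!/(n−ν)!) L_{n−ν}^{α+j}`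
for `0 ≤ k ≤ n`, `n ≥ k + j`. -/
theorem laguerre_connection (α : ℝ) (hα : -1 < α) (j k n : ℕ)
    (hkn : k ≤ n) (hn : k + j ≤ n) :
    laguerreM α (n - k)
      = ∑ ν ∈ Finset.Icc k (k + j),
          C ((j.choose (ν - k) : ℝ) * ((n - k).factorial : ℝ) / ((n - ν).factorial : ℝ))
            * laguerreM (α + j) (n - ν) := by
  rw [connection_aux α j (n - k) (by omega)]
  refine Finset.sum_bij' (fun i _ => k + i) (fun ν _ => ν - k) ?_ ?_ ?_ ?_ ?_
  · intro a ha
    simp only [Finset.mem_range] at ha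
    simp only [Finset.mem_Icc]
    omega
  · intro a ha
    simp only [Finset.mem_Icc] at ha
    simp only [Finset.mem_range]
    omega
  · intro a ha; omega
  · intro a ha
    simp only [Finset.mem_Icc] at ha
    omega
  · intro a ha
    rw [show k + a - k = a by omega, show n - (k + a) = n - k - a by omega]
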